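/- Each diagonal entry of the learning transfer matrix T = Λ Φ (ΦᵀΛΦ + δI_n)⁻¹ Φᵀ lies in the interval [0, 1]. -/
import Mathlib

open Matrix

theorem transfer_matrix_diag_mem_Icc
    (M n : ℕ)
    (lam : Fin M → ℝ) (hpos : ∀ i, 0 < lam i)
    (Φ : Matrix (Fin M) (Fin n) ℝ)
    (δ : ℝ) (hδ : 0 ≤ δ)
    (hinv : IsUnit (Φᵀ * Matrix.diagonal lam * Φ + δ • (1 : Matrix (Fin n) (Fin n) ℝ)))
    (i : Fin M) :
    (Matrix.diagonal lam * Φ *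
        (Φᵀ * Matrix.diagonal lam * Φ + δ • (1 : Matrix (Fin n) (Fin n) ℝ))⁻¹ * Φᵀ) i i
      ∈ Set.Icc (0 : ℝ) 1 := by
  set D := Matrix.diagonal lam with hD
  set A := Φᵀ * D * Φ + δ • (1 : Matrix (Fin n) (Fin n) ℝ) with hA
  set B := A⁻¹ with hB
  set v : Fin n → ℝ := fun j => Φ i j with hv
  set x : Fin n → ℝ := B *ᵥ v with hx
  set t : ℝ := v ⬝ᵥ x with ht
  have hAB : A * B = 1 := Matrix.mul_nonsing_inv A ((Matrix.isUnit_iff_isUnit_det A).mp hinv)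
  have hAx : A *ᵥ x = v := by
    rw [hx, Matrix.mulVec_mulVec, hAB, Matrix.one_mulVec]
  set y : Fin M → ℝ := Φ *ᵥ x with hy
  have hyi : y i = t := by
    simp [hy, ht, Matrix.mulVec, dotProduct, hv]
  have hq : x ⬝ᵥ (A *ᵥ x) = (∑ j, lam j * (y j)^2) + δ * (∑ j, (x j)^2) := by
    rw [hA, Matrix.add_mulVec, dotProduct_add, Matrix.smul_mulVec,
      Matrix.one_mulVec, dotProduct_smul, smul_eq_mul]
    have h1 : Φᵀ *ᵥ (D *ᵥ y) = (Φᵀ * D * Φ) *ᵥ x := by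
      rw [hy, Matrix.mulVec_mulVec, Matrix.mulVec_mulVec]
    rw [← h1, Matrix.dotProduct_mulVec, Matrix.vecMul_transpose, ← hy]
    congr 1
    · simp only [dotProduct, Matrix.mulVec_diagonal, hD]
      exact Finset.sum_congr rfl fun j _ => by ring
    · simp only [dotProduct, Finset.mul_sum]
      exact Finset.sum_congr rfl fun j _ => by ring
  have htq : t = (∑ j, lam j * (y j)^2) + δ * (∑ j, (x j)^2) := by
    rw [ht, ← hAx, dotProduct_comm, hq]
  have hsum1 : lam i * t^2 ≤ ∑ j, lam j * (y j)^2 := by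
    have h := Finset.single_le_sum (f := fun j => lam j * (y j)^2)
      (fun j _ => by have := (hpos j).le; positivity) (Finset.mem_univ i)
    simpa only [hyi] using h
  have ht0 : 0 ≤ t := by
    rw [htq]
    have : ∀ j, 0 ≤ lam j * (y j)^2 := fun j => by have := (hpos j).le; positivity
    have h2 : 0 ≤ ∑ j, (x j)^2 := by positivity
    have h1 : (0:ℝ) ≤ ∑ j, lam j * (y j)^2 := Finset.sum_nonneg fun j _ => this j
    nlinarith
  have hsum2 : 0 ≤ δ * ∑ j, (x j)^2 := by
    have : (0:ℝ) ≤ ∑ j, (x j)^2 := by positivity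
    exact mul_nonneg hδ this
  have hkey : lam i * t^2 ≤ t := by linarith [hsum1, hsum2]
  have hXB : (Φ * B * Φᵀ) i i = t := by
    rw [ht, hx, Matrix.mul_assoc, Matrix.mul_apply]
    simp only [Matrix.mul_apply, Matrix.mulVec, dotProduct, hv, Matrix.transpose_apply]
  have hent : (D * Φ * B * Φᵀ) i i = lam i * t := by
    have : D * Φ * B * Φᵀ = D * (Φ * B * Φᵀ) := by
      rw [Matrix.mul_assoc, Matrix.mul_assoc, Matrix.mul_assoc]
    rw [this, hD, Matrix.diagonal_mul, hXB]
  rw [hent, Set.mem_Icc]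
  refine ⟨mul_nonneg (hpos i).le ht0, ?_⟩
  nlinarith [hpos i, ht0, hkey]
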